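/- arXiv:1801.01014 — 2 statements merged into one kernel-verified Lean document; each statement's English description precedes it below -/
import Mathlib

section
/- Let (Y,δ) be a finite nonempty metric space. Then the following are equivalent: (1) there exists y*∈Y such that δ(y*,x) ≠ δ(y*,z) whenever x and z are distinct points of Y; (2) there exist an unbounded metric space (X,d) and a scaling sequence r̃ such that (X,d) has exactly one pretangent space at infinity with respect to r̃, and this pretangent space is isometric to (Y,δ). -/
open Filter Topology
open scoped Classical

/-- An unbounded metric space. -/
def UnboundedSpace (X : Type*) [MetricSpace X] : Prop :=
  ¬ Bornology.IsBounded (Set.univ : Set X)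

/-- A scaling sequence: positive reals tending to infinity. -/
def ScalingSeq (r : ℕ → ℝ) : Prop :=
  (∀ n, 0 < r n) ∧ Filter.Tendsto r Filter.atTop Filter.atTop

/-- Two sequences are mutually stable w.r.t. `r` if `d(x_n, y_n)/r_n` has a finite limit. -/
def MutuallyStable {X : Type*} [MetricSpace X] (r : ℕ → ℝ) (x y : ℕ → X) : Prop :=
  ∃ L : ℝ, Filter.Tendsto (fun n => dist (x n) (y n) / r n) Filter.atTop (nhds L)

/-- `Seq(X, r̃)`: sequences going to infinity such that `d(x_n, p)/r_n` has a finite limit. -/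
def SeqInf {X : Type*} [MetricSpace X] (r : ℕ → ℝ) (p : X) : Set (ℕ → X) :=
  {x | Filter.Tendsto (fun n => dist (x n) p) Filter.atTop Filter.atTop ∧
    ∃ L : ℝ, Filter.Tendsto (fun n => dist (x n) p / r n) Filter.atTop (nhds L)}

/-- The relation `x̃ ≡ ỹ`, i.e. `d(x_n, y_n)/r_n → 0`. -/
def EquivSeq {X : Type*} [MetricSpace X] (r : ℕ → ℝ) (x y : ℕ → X) : Prop :=
  Filter.Tendsto (fun n => dist (x n) (y n) / r n) Filter.atTop (nhds 0)

/-- The `≡`-equivalence class of `x` inside `Seq(X, r̃)`. -/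
def classOf {X : Type*} [MetricSpace X] (r : ℕ → ℝ) (p : X) (x : ℕ → X) : Set (ℕ → X) :=
  {y | y ∈ SeqInf r p ∧ EquivSeq r x y}

/-- The vertex set of the cluster graph `G_{X, r̃}`: all `≡`-classes of `Seq(X, r̃)`. -/
def VertexSet {X : Type*} [MetricSpace X] (r : ℕ → ℝ) (p : X) : Set (Set (ℕ → X)) :=
  {v | ∃ x ∈ SeqInf r p, v = classOf r p x}

/-- Adjacency in the cluster graph `G_{X, r̃}`: distinct classes whose representatives
are mutually stable. -/
def AdjacentCl {X : Type*} [MetricSpace X] (r : ℕ → ℝ) (p : X) (u v : Set (ℕ → X)) : Prop :=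
  u ∈ VertexSet r p ∧ v ∈ VertexSet r p ∧ u ≠ v ∧
    ∀ x ∈ u, ∀ y ∈ v, MutuallyStable r x y

/-- The weight `ρ_X` on the cluster graph: for an edge `{u,v}` it is the (unique) limit
`lim d(x_n, y_n)/r_n` for representatives. -/
noncomputable def rhoX {X : Type*} [MetricSpace X] (r : ℕ → ℝ) (u v : Set (ℕ → X)) : ℝ :=
  sSup {L : ℝ | ∃ x ∈ u, ∃ y ∈ v,
    Filter.Tendsto (fun n => dist (x n) (y n) / r n) Filter.atTop (nhds L)}

/-- The root `ν₀ = X̃⁰_{∞,r̃}`: sequences with `d(z_n,p) → ∞` and `d(z_n,p)/r_n → 0`. -/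
def rootClass {X : Type*} [MetricSpace X] (r : ℕ → ℝ) (p : X) : Set (ℕ → X) :=
  {z | Filter.Tendsto (fun n => dist (z n) p) Filter.atTop Filter.atTop ∧
    Filter.Tendsto (fun n => dist (z n) p / r n) Filter.atTop (nhds 0)}

/-- The labeling `ρ⁰` of vertices: `ρ⁰(v) = lim d(x_n,p)/r_n` for `x̃ ∈ v`. -/
noncomputable def rho0 {X : Type*} [MetricSpace X] (r : ℕ → ℝ) (p : X)
    (v : Set (ℕ → X)) : ℝ :=
  sSup {L : ℝ | ∃ x ∈ v, Filter.Tendsto (fun n => dist (x n) p / r n) Filter.atTop (nhds L)}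

/-- A self-stable family: a subset of `Seq(X, r̃)` any two of whose members are
mutually stable. -/
def SelfStable {X : Type*} [MetricSpace X] (r : ℕ → ℝ) (p : X) (F : Set (ℕ → X)) : Prop :=
  F ⊆ SeqInf r p ∧ ∀ x ∈ F, ∀ y ∈ F, MutuallyStable r x y

/-- A maximal self-stable set `X̃_{∞, r̃}`. -/
def MaxSelfStable {X : Type*} [MetricSpace X] (r : ℕ → ℝ) (p : X) (F : Set (ℕ → X)) : Prop :=
  SelfStable r p F ∧ ∀ F', SelfStable r p F' → F ⊆ F' → F = F'

/-- The pretangent space `Ω^X_{∞,r̃}` attached to a maximal self-stable set `F`: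
the set of `≡`-classes of members of `F`. -/
def PretangentCl {X : Type*} [MetricSpace X] (r : ℕ → ℝ) (F : Set (ℕ → X)) :
    Set (Set (ℕ → X)) :=
  {v | ∃ x ∈ F, v = {y | y ∈ F ∧ EquivSeq r x y}}

/-- A clique in the cluster graph `G_{X, r̃}`. -/
def IsCliqueCl {X : Type*} [MetricSpace X] (r : ℕ → ℝ) (p : X)
    (C : Set (Set (ℕ → X))) : Prop :=
  C ⊆ VertexSet r p ∧ ∀ u ∈ C, ∀ v ∈ C, u ≠ v → AdjacentCl r p u v

section Helpers

variable {X : Type*} [MetricSpace X] {r : ℕ → ℝ} {p : X}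

lemma equivSeq_refl (x : ℕ → X) : EquivSeq r x x := by
  have : (fun n => dist (x n) (x n) / r n) = fun _ => (0:ℝ) := by
    funext n; simp
  rw [EquivSeq, this]; exact tendsto_const_nhds

lemma equivSeq_symm {x y : ℕ → X} (h : EquivSeq r x y) : EquivSeq r y x := by
  have : (fun n => dist (y n) (x n) / r n) = (fun n => dist (x n) (y n) / r n) := by
    funext n; rw [dist_comm]
  rw [EquivSeq, this]; exact h

/-- Key squeeze: replacing a sequence by an equivalent one does not change limits. -/
lemma tendsto_dist_div_congr (hr : ∀ n, 0 < r n) {x x' y : ℕ → X}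
    (hxx' : Filter.Tendsto (fun n => dist (x n) (x' n) / r n) Filter.atTop (nhds 0))
    {L : ℝ} (h : Filter.Tendsto (fun n => dist (x n) (y n) / r n) Filter.atTop (nhds L)) :
    Filter.Tendsto (fun n => dist (x' n) (y n) / r n) Filter.atTop (nhds L) := by
  have hlo : Filter.Tendsto
      (fun n => dist (x n) (y n) / r n - dist (x n) (x' n) / r n) Filter.atTop (nhds L) := by
    simpa using h.sub hxx'
  have hhi : Filter.Tendsto
      (fun n => dist (x n) (y n) / r n + dist (x n) (x' n) / r n) Filter.atTop (nhds L) := by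
    simpa using h.add hxx'
  refine tendsto_of_tendsto_of_tendsto_of_le_of_le hlo hhi (fun n => ?_) (fun n => ?_)
  · rw [← sub_div]
    apply div_le_div_of_nonneg_right ?_ (hr n).le
    · have := dist_triangle (x n) (x' n) (y n)
      linarith
  · rw [← add_div]
    apply div_le_div_of_nonneg_right ?_ (hr n).le
    have := dist_triangle (x' n) (x n) (y n)
    have := dist_comm (x' n) (x n)
    linarith

lemma equivSeq_trans (hr : ∀ n, 0 < r n) {x y z : ℕ → X}
    (h1 : EquivSeq r x y) (h2 : EquivSeq r y z) : EquivSeq r x z :=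
  tendsto_dist_div_congr hr (equivSeq_symm h1) h2

lemma tendsto_dist_div_congr_right (hr : ∀ n, 0 < r n) {x y y' : ℕ → X}
    (hyy' : Filter.Tendsto (fun n => dist (y n) (y' n) / r n) Filter.atTop (nhds 0))
    {L : ℝ} (h : Filter.Tendsto (fun n => dist (x n) (y n) / r n) Filter.atTop (nhds L)) :
    Filter.Tendsto (fun n => dist (x n) (y' n) / r n) Filter.atTop (nhds L) := by
  have h' : Filter.Tendsto (fun n => dist (y n) (x n) / r n) Filter.atTop (nhds L) := by
    simpa [dist_comm] using h
  have := tendsto_dist_div_congr hr hyy' h'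
  simpa [dist_comm] using this

/-- If `d(x_n,p)/r_n → 0` and `d(z_n,p)/r_n → M` then `d(x_n,z_n)/r_n → M`. -/
lemma tendsto_dist_div_of_zero (hr : ∀ n, 0 < r n) {x z : ℕ → X}
    (hx0 : Filter.Tendsto (fun n => dist (x n) p / r n) Filter.atTop (nhds 0))
    {M : ℝ} (hz : Filter.Tendsto (fun n => dist (z n) p / r n) Filter.atTop (nhds M)) :
    Filter.Tendsto (fun n => dist (x n) (z n) / r n) Filter.atTop (nhds M) := by
  have hx0' : Filter.Tendsto (fun n => dist ((fun _ => p) n) (x n) / r n) Filter.atTop (nhds 0) := by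
    simpa [dist_comm] using hx0
  have hz' : Filter.Tendsto (fun n => dist ((fun _ => p) n) (z n) / r n) Filter.atTop (nhds M) := by
    simpa [dist_comm] using hz
  exact tendsto_dist_div_congr hr hx0' hz'

/-- Classes of equivalent sequences coincide. -/
lemma class_eq_of_equiv (hr : ∀ n, 0 < r n) (S : Set (ℕ → X)) {x z : ℕ → X}
    (h : EquivSeq r x z) :
    {w | w ∈ S ∧ EquivSeq r x w} = {w | w ∈ S ∧ EquivSeq r z w} := by
  ext w
  simp only [Set.mem_setOf_eq, and_congr_right_iff]
  exact fun _ => ⟨fun hw => equivSeq_trans hr (equivSeq_symm h) hw,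
    fun hw => equivSeq_trans hr h hw⟩

lemma sUnion_pretangentCl (F : Set (ℕ → X)) : ⋃₀ PretangentCl r F = F := by
  apply subset_antisymm
  · rintro w ⟨v, ⟨x, _, rfl⟩, hw⟩
    exact hw.1
  · intro x hx
    exact ⟨{y | y ∈ F ∧ EquivSeq r x y}, ⟨x, hx, rfl⟩, hx, equivSeq_refl x⟩

lemma exists_maxSelfStable_superset {G : Set (ℕ → X)} (hG : SelfStable r p G) :
    ∃ F, G ⊆ F ∧ MaxSelfStable r p F := by
  have hz : ∀ c ⊆ {F | SelfStable r p F}, IsChain (· ⊆ ·) c → c.Nonempty →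
      ∃ ub ∈ {F | SelfStable r p F}, ∀ s ∈ c, s ⊆ ub := by
    intro c hcS hchain _
    refine ⟨⋃₀ c, ⟨?_, ?_⟩, fun s hs => Set.subset_sUnion_of_mem hs⟩
    · exact Set.sUnion_subset fun s hs => (hcS hs).1
    · rintro x ⟨s, hs, hxs⟩ y ⟨t, ht, hyt⟩
      rcases hchain.total hs ht with hst | hts
      · exact (hcS ht).2 x (hst hxs) y hyt
      · exact (hcS hs).2 x hxs y (hts hyt)
  obtain ⟨m, hGm, hm⟩ := zorn_subset_nonempty {F | SelfStable r p F} hz G hG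
  exact ⟨m, hGm, hm.prop, fun F' hF' hmF' => subset_antisymm hmF' (hm.le_of_ge hF' hmF')⟩

lemma limit_nonneg (hr : ∀ n, 0 < r n) {f : ℕ → ℝ} (hf : ∀ n, 0 ≤ f n)
    {L : ℝ} (h : Filter.Tendsto (fun n => f n / r n) Filter.atTop (nhds L)) : 0 ≤ L :=
  ge_of_tendsto' h fun n => div_nonneg (hf n) (hr n).le

/-- A sequence interleaving two members of a class-with-same-limit setup. -/
lemma pretangent_eq_imp_eq {F₁ F₂ : Set (ℕ → X)}
    (h : PretangentCl r F₁ = PretangentCl r F₂) : F₁ = F₂ := by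
  rw [← sUnion_pretangentCl (r := r) F₁, ← sUnion_pretangentCl (r := r) F₂, h]

end Helpers

namespace Fwd

/-- The scaling sequence `4^(n²)`. -/
noncomputable def R (n : ℕ) : ℝ := 4 ^ (n ^ 2)

/-- The positions of the base points on the ray. -/
noncomputable def T (n : ℕ) : ℝ := R n / (n + 1)

lemma R_pos (n : ℕ) : 0 < R n := by unfold R; positivity

lemma R_zero : R 0 = 1 := by simp [R]

lemma one_le_R (n : ℕ) : 1 ≤ R n := one_le_pow₀ (by norm_num)

lemma R_mono : Monotone R := fun n m h =>
  pow_le_pow_right₀ (by norm_num) (Nat.pow_le_pow_left h 2)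

lemma T_pos (n : ℕ) : 0 < T n := div_pos (R_pos n) (by positivity)

lemma T_le_R (n : ℕ) : T n ≤ R n :=
  div_le_self (R_pos n).le (by push_cast; linarith [Nat.cast_nonneg (α := ℝ) n])

lemma T_R_ratio (n : ℕ) : T n / R n = 1 / (n + 1) := by
  unfold T
  rw [div_div, mul_comm, ← div_div, div_self (R_pos n).ne']

/-- The master inequality: for `n < m`, `(m+1)² ⬝ R n ≤ R m`. -/
lemma key_ineq {n m : ℕ} (h : n < m) : ((m : ℝ) + 1) ^ 2 * R n ≤ R m := by
  have h1 : ((m : ℝ) + 1) ≤ 2 ^ m := by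
    exact_mod_cast (Nat.lt_two_pow_self (n := m))
  have h2 : ((m : ℝ) + 1) ^ 2 ≤ 4 ^ m := by
    calc ((m : ℝ) + 1) ^ 2 ≤ (2 ^ m) ^ 2 := by
          apply pow_le_pow_left₀ (by positivity) h1
      _ = 4 ^ m := by
          rw [← pow_mul, mul_comm, pow_mul]; norm_num
  have h3 : n ^ 2 + m ≤ m ^ 2 := by nlinarith
  calc ((m : ℝ) + 1) ^ 2 * R n ≤ 4 ^ m * 4 ^ (n ^ 2) := by
        apply mul_le_mul h2 le_rfl (R_pos n).le (by positivity)
    _ = 4 ^ (n ^ 2 + m) := by rw [pow_add, mul_comm]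
    _ ≤ R m := pow_le_pow_right₀ (by norm_num) h3

/-- For `n < m`, `(m+1) ⬝ R n ≤ T m`. -/
lemma key_TR {n m : ℕ} (h : n < m) : ((m : ℝ) + 1) * R n ≤ T m := by
  rw [T, le_div_iff₀ (by positivity)]
  calc ((m : ℝ) + 1) * R n * (m + 1) = ((m : ℝ) + 1) ^ 2 * R n := by ring
    _ ≤ R m := key_ineq h

/-- For `m < n`, `(m+1) ⬝ R m ≤ R n`. -/
lemma key_RR {m n : ℕ} (h : m < n) : ((m : ℝ) + 1) * R m ≤ R n := by
  have hk := key_ineq h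
  have hmn : (m:ℝ) ≤ n := Nat.cast_le.2 h.le
  have h1 : ((m:ℝ) + 1) ≤ ((n:ℝ) + 1) ^ 2 := by nlinarith [Nat.cast_nonneg (α := ℝ) n]
  calc ((m : ℝ) + 1) * R m ≤ ((n:ℝ) + 1) ^ 2 * R m :=
        mul_le_mul_of_nonneg_right h1 (R_pos m).le
    _ ≤ R n := hk

lemma T_strictMono : StrictMono T := by
  intro n m h
  have h1 : T n ≤ R n := T_le_R n
  have h2 : ((m:ℝ) + 1) * R n ≤ T m := key_TR h
  have h3 : (1:ℝ) ≤ (m:ℝ) := by exact_mod_cast Nat.one_le_iff_ne_zero.2 (by omega)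
  nlinarith [R_pos n]

lemma nat_le_T (n : ℕ) (hn : 1 ≤ n) : (n : ℝ) ≤ T n := by
  have hk := key_TR (n := n - 1) (m := n) (by omega)
  have hR := one_le_R (n - 1)
  nlinarith [Nat.cast_nonneg (α := ℝ) n]

lemma T_tendsto : Filter.Tendsto T Filter.atTop Filter.atTop := by
  refine Filter.tendsto_atTop_mono' _ ?_ tendsto_natCast_atTop_atTop
  filter_upwards [Filter.eventually_ge_atTop 1] with n hn
  exact nat_le_T n hn

lemma R_tendsto : Filter.Tendsto R Filter.atTop Filter.atTop :=
  Filter.tendsto_atTop_mono (fun n => (T_le_R n)) T_tendsto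

end Fwd

namespace Fwd

variable {Y : Type*} [MetricSpace Y] [Fintype Y] [Nonempty Y]

/-- The underlying point set of the constructed space: a `Type 0`. -/
abbrev Carrier (Y : Type*) [Fintype Y] : Type := Fin (Fintype.card Y) × ℕ

/-- The identification of `Fin (card Y)` with `Y`. -/
noncomputable def em (Y : Type*) [Fintype Y] (i : Fin (Fintype.card Y)) : Y :=
  (Fintype.equivFin Y).symm i

lemma em_injective : Function.Injective (em Y) := (Fintype.equivFin Y).symm.injective

/-- The distance on the constructed space: scaled copies of `Y` glued along a ray. -/
noncomputable def dC (y₀ : Y) (q q' : Carrier Y) : ℝ :=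
  if q.2 = q'.2 then R q.2 * dist (em Y q.1) (em Y q'.1)
  else R q.2 * dist y₀ (em Y q.1) + R q'.2 * dist y₀ (em Y q'.1) + |T q.2 - T q'.2|

variable (y₀ : Y)

lemma dC_self (q : Carrier Y) : dC y₀ q q = 0 := by simp [dC]

lemma dC_comm (q q' : Carrier Y) : dC y₀ q q' = dC y₀ q' q := by
  obtain ⟨i, n⟩ := q; obtain ⟨j, m⟩ := q'
  rcases eq_or_ne n m with h | h
  · subst h; simp [dC, dist_comm]
  · simp only [dC, if_neg h, if_neg (Ne.symm h)]
    rw [abs_sub_comm]; ring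

lemma dC_eq_zero {q q' : Carrier Y} (h : dC y₀ q q' = 0) : q = q' := by
  rcases eq_or_ne q.2 q'.2 with h2 | h2
  · simp only [dC, if_pos h2] at h
    rcases mul_eq_zero.1 h with hR | hd
    · exact absurd hR (R_pos _).ne'
    · have : em Y q.1 = em Y q'.1 := by rwa [dist_eq_zero] at hd
      exact Prod.ext (em_injective this) h2
  · exfalso
    simp only [dC, if_neg h2] at h
    have h1 : 0 ≤ R q.2 * dist y₀ (em Y q.1) := mul_nonneg (R_pos _).le dist_nonneg
    have h3 : 0 ≤ R q'.2 * dist y₀ (em Y q'.1) := mul_nonneg (R_pos _).le dist_nonneg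
    have h4 : 0 ≤ |T q.2 - T q'.2| := abs_nonneg _
    have h5 : |T q.2 - T q'.2| = 0 := by linarith
    rw [abs_eq_zero, sub_eq_zero] at h5
    exact h2 (T_strictMono.injective h5)

lemma dC_triangle (q₁ q₂ q₃ : Carrier Y) : dC y₀ q₁ q₃ ≤ dC y₀ q₁ q₂ + dC y₀ q₂ q₃ := by
  obtain ⟨i₁, n₁⟩ := q₁; obtain ⟨i₂, n₂⟩ := q₂; obtain ⟨i₃, n₃⟩ := q₃
  have ha : ∀ i j : Fin (Fintype.card Y), dist (em Y i) (em Y j) ≤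
      dist y₀ (em Y i) + dist y₀ (em Y j) := fun i j => by
    have h := dist_triangle (em Y i) y₀ (em Y j)
    have h2 := dist_comm (em Y i) y₀
    linarith
  have hb : ∀ i j : Fin (Fintype.card Y), dist y₀ (em Y i) ≤
      dist (em Y i) (em Y j) + dist y₀ (em Y j) := fun i j => by
    have h := dist_triangle y₀ (em Y j) (em Y i)
    have h2 := dist_comm (em Y j) (em Y i)
    linarith
  by_cases h13 : n₁ = n₃
  · by_cases h12 : n₁ = n₂
    · have h23 : n₂ = n₃ := h12 ▸ h13
      simp only [dC, if_pos h13, if_pos h12, if_pos h23]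
      subst h12; subst h13
      have := dist_triangle (em Y i₁) (em Y i₂) (em Y i₃)
      nlinarith [R_pos n₁, dist_nonneg (x := em Y i₁) (y := em Y i₂)]
    · have h23 : ¬ n₂ = n₃ := fun hh => h12 (h13 ▸ hh.symm ▸ rfl)
      simp only [dC, if_pos h13, if_neg h12, if_neg h23]
      subst h13
      have h1 := ha i₁ i₃
      nlinarith [R_pos n₁, R_pos n₂, abs_nonneg (T n₁ - T n₂), abs_nonneg (T n₂ - T n₁),
        dist_nonneg (x := y₀) (y := em Y i₂)]
  · by_cases h12 : n₁ = n₂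
    · have h23 : ¬ n₂ = n₃ := fun hh => h13 (h12 ▸ hh)
      simp only [dC, if_neg h13, if_pos h12, if_neg h23]
      subst h12
      have h1 := hb i₁ i₂
      nlinarith [R_pos n₁, dist_nonneg (x := em Y i₁) (y := em Y i₂)]
    · by_cases h23 : n₂ = n₃
      · simp only [dC, if_neg h13, if_neg h12, if_pos h23]
        subst h23
        have h1 := hb i₃ i₂
        have h2 : dist (em Y i₂) (em Y i₃) = dist (em Y i₃) (em Y i₂) := dist_comm _ _
        nlinarith [R_pos n₂, dist_nonneg (x := em Y i₂) (y := em Y i₃)]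
      · simp only [dC, if_neg h13, if_neg h12, if_neg h23]
        have h1 : |T n₁ - T n₃| ≤ |T n₁ - T n₂| + |T n₂ - T n₃| := abs_sub_le _ _ _
        nlinarith [R_pos n₂, dist_nonneg (x := y₀) (y := em Y i₂)]

/-- The metric space structure on the carrier. -/
noncomputable def instC (y₀ : Y) : MetricSpace (Carrier Y) :=
  { dist := dC y₀
    dist_self := dC_self y₀
    dist_comm := dC_comm y₀
    dist_triangle := dC_triangle y₀
    eq_of_dist_eq_zero := dC_eq_zero y₀ }

end Fwd

namespace Fwd

variable {Y : Type*} [MetricSpace Y] [Fintype Y] [Nonempty Y] (y₀ : Y)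

/-- An upper bound for distances in `Y`. -/
noncomputable def A (Y : Type*) [MetricSpace Y] : ℝ := Metric.diam (Set.univ : Set Y)

lemma A_nonneg : 0 ≤ A Y := Metric.diam_nonneg

lemma dist_le_A (y y' : Y) : dist y y' ≤ A Y :=
  Metric.dist_le_diam_of_mem Set.finite_univ.isBounded (Set.mem_univ y) (Set.mem_univ y')

/-- The base point. -/
noncomputable def pC (Y : Type*) [MetricSpace Y] [Fintype Y] (y₀ : Y) : Carrier Y :=
  (Fintype.equivFin Y y₀, 0)

lemma T_zero : T 0 = 1 := by simp [T, R_zero]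

section WithInstance

variable [MS : MetricSpace (Carrier Y)]
variable (hd : ∀ q q' : Carrier Y, dist q q' = dC y₀ q q')
variable (hy₀ : ∀ u v : Y, u ≠ v → dist y₀ u ≠ dist y₀ v)

include hd

/-- Formula for the distance to the base point. -/
lemma dist_pC (i : Fin (Fintype.card Y)) (k : ℕ) :
    dist ((i, k) : Carrier Y) (pC Y y₀) =
      if k = 0 then dist y₀ (em Y i)
      else R k * dist y₀ (em Y i) + (T k - T 0) := by
  rw [hd]
  rcases eq_or_ne k 0 with hk | hk
  · subst hk
    have he : em Y (Fintype.equivFin Y y₀) = y₀ := (Fintype.equivFin Y).symm_apply_apply y₀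
    simp [dC, pC, R_zero, he, dist_comm]
  · have : T 0 < T k := T_strictMono (Nat.pos_of_ne_zero hk)
    simp only [dC, pC, if_neg hk, if_neg hk, R_zero,
      show em Y (Fintype.equivFin Y y₀) = y₀ from (Fintype.equivFin Y).symm_apply_apply y₀,
      dist_self, mul_zero, one_mul, add_zero]
    rw [abs_of_pos (by linarith)]

lemma dist_pC_le (i : Fin (Fintype.card Y)) (k : ℕ) :
    dist ((i, k) : Carrier Y) (pC Y y₀) ≤ R k * A Y + T k := by
  rw [dist_pC y₀ hd]
  rcases eq_or_ne k 0 with hk | hk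
  · subst hk
    rw [if_pos rfl]
    have h1 := dist_le_A (Y := Y) y₀ (em Y i)
    have h2 := T_pos 0
    have h3 := one_le_R 0
    nlinarith [A_nonneg (Y := Y)]
  · rw [if_neg hk]
    have h1 := dist_le_A (Y := Y) y₀ (em Y i)
    have h2 := T_pos 0
    have h3 := R_pos k
    nlinarith

lemma dist_pC_ge (i : Fin (Fintype.card Y)) (k : ℕ) (hk : 1 ≤ k) :
    T k - T 0 ≤ dist ((i, k) : Carrier Y) (pC Y y₀) := by
  rw [dist_pC y₀ hd, if_neg (by omega)]
  nlinarith [R_pos k, dist_nonneg (x := y₀) (y := em Y i)]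

lemma dist_same_level (i j : Fin (Fintype.card Y)) (n : ℕ) :
    dist ((i, n) : Carrier Y) ((j, n) : Carrier Y) = R n * dist (em Y i) (em Y j) := by
  rw [hd]; simp [dC]

/-- Members of `SeqInf` have level tending to infinity. -/
lemma level_tendsto {x : ℕ → Carrier Y} (hx : x ∈ SeqInf R (pC Y y₀)) :
    Filter.Tendsto (fun n => (x n).2) Filter.atTop Filter.atTop := by
  rw [Filter.tendsto_atTop]
  intro K
  have hbig := Filter.tendsto_atTop.1 hx.1 (R K * A Y + T K + 1)
  filter_upwards [hbig] with n hn
  by_contra hcon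
  push_neg at hcon
  have h1 : dist (x n) (pC Y y₀) ≤ R (x n).2 * A Y + T (x n).2 := by
    have := dist_pC_le y₀ hd (x n).1 (x n).2
    simpa using this
  have h2 : R (x n).2 ≤ R K := R_mono (by omega)
  have h3 : T (x n).2 ≤ T K := T_strictMono.monotone (by omega)
  nlinarith [A_nonneg (Y := Y)]

include hy₀ in
lemma classification {x : ℕ → Carrier Y} (hx : x ∈ SeqInf R (pC Y y₀)) {L : ℝ}
    (hL : Filter.Tendsto (fun n => dist (x n) (pC Y y₀) / R n) Filter.atTop (nhds L))
    (hLpos : 0 < L) :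
    ∃ i : Fin (Fintype.card Y), dist y₀ (em Y i) = L ∧ ∀ᶠ n in Filter.atTop, x n = (i, n) := by
  have hm := level_tendsto y₀ hd hx
  -- Step 1: eventually (x n).2 ≤ n
  have step1 : ∀ᶠ n in Filter.atTop, (x n).2 ≤ n := by
    have hub : ∀ᶠ n in Filter.atTop, dist (x n) (pC Y y₀) / R n ≤ L + 1 :=
      hL.eventually (eventually_le_nhds (by linarith))
    have hn2 : ∀ᶠ n : ℕ in Filter.atTop, L + 1 < (n : ℝ) + 1 := by
      have := tendsto_natCast_atTop_atTop (R := ℝ)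
      filter_upwards [this.eventually_gt_atTop L] with n hn
      linarith
    filter_upwards [hub, hn2] with n hub hn2
    by_contra hcon
    push_neg at hcon
    -- (x n).2 > n, so distance is huge
    set k := (x n).2 with hk
    have hk1 : 1 ≤ k := by omega
    have hkey : ((k : ℝ) + 1) * R n ≤ T k := key_TR hcon
    have hge : T k - T 0 ≤ dist (x n) (pC Y y₀) := by
      have := dist_pC_ge y₀ hd (x n).1 k hk1
      simpa using this
    have hR1 : (1:ℝ) ≤ R n := one_le_R n
    have hdist : ((n:ℝ) + 1) * R n ≤ dist (x n) (pC Y y₀) := by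
      have hkn : (n:ℝ) + 1 ≤ (k:ℝ) := by exact_mod_cast hcon
      rw [T_zero] at hge
      nlinarith [R_pos n]
    have : (n:ℝ) + 1 ≤ dist (x n) (pC Y y₀) / R n :=
      (le_div_iff₀ (R_pos n)).2 (by linarith [hdist])
    linarith
  -- Step 2: eventually (x n).2 = n
  have step2 : ∀ᶠ n in Filter.atTop, (x n).2 = n := by
    have hlb : ∀ᶠ n in Filter.atTop, L / 2 < dist (x n) (pC Y y₀) / R n :=
      hL.eventually (eventually_gt_nhds (by linarith))
    have hsmall : Filter.Tendsto (fun n => (A Y + 1) / (((x n).2 : ℝ) + 1))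
        Filter.atTop (nhds 0) := by
      apply Filter.Tendsto.div_atTop tendsto_const_nhds
      apply Filter.tendsto_atTop_add_const_right _ 1
      exact (tendsto_natCast_atTop_atTop (R := ℝ)).comp hm
    have hsm : ∀ᶠ n in Filter.atTop, (A Y + 1) / (((x n).2 : ℝ) + 1) < L / 2 :=
      hsmall.eventually (eventually_lt_nhds (by linarith))
    filter_upwards [step1, hlb, hsm, hm.eventually_ge_atTop 1] with n h1 h2 h3 h4
    by_contra hcon
    have hlt : (x n).2 < n := by omega
    set k := (x n).2 with hk
    have hub : dist (x n) (pC Y y₀) ≤ R k * (A Y + 1) := by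
      have hf : dist (x n) (pC Y y₀) = R k * dist y₀ (em Y (x n).1) + (T k - T 0) := by
        have := dist_pC y₀ hd (x n).1 k
        rw [if_neg (by omega)] at this
        simpa using this
      have h5 := dist_le_A (Y := Y) y₀ (em Y (x n).1)
      have h6 := T_le_R k
      have h7 := T_pos 0
      nlinarith [R_pos k]
    have hRR : ((k:ℝ) + 1) * R k ≤ R n := key_RR hlt
    have : dist (x n) (pC Y y₀) / R n ≤ (A Y + 1) / ((k:ℝ) + 1) := by
      rw [div_le_div_iff₀ (R_pos n) (by positivity)]
      calc dist (x n) (pC Y y₀) * ((k:ℝ) + 1) ≤ R k * (A Y + 1) * ((k:ℝ) + 1) := by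
            apply mul_le_mul_of_nonneg_right hub (by positivity)
        _ = (A Y + 1) * (((k:ℝ) + 1) * R k) := by ring
        _ ≤ (A Y + 1) * R n := by
            apply mul_le_mul_of_nonneg_left hRR (by linarith [A_nonneg (Y := Y)])
    linarith
  -- Step 3: the distance values converge to L
  have hw : Filter.Tendsto (fun n : ℕ => (T n - T 0) / R n) Filter.atTop (nhds 0) := by
    have h1 : Filter.Tendsto (fun n : ℕ => T n / R n) Filter.atTop (nhds 0) := by
      simp only [T_R_ratio]
      exact tendsto_one_div_add_atTop_nhds_zero_nat
    have h2 : Filter.Tendsto (fun n : ℕ => T 0 / R n) Filter.atTop (nhds 0) := by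
      simp only [T_zero]
      simpa [one_div, Pi.inv_def] using R_tendsto.inv_tendsto_atTop
    simpa [sub_div] using h1.sub h2
  have ha_tend : Filter.Tendsto (fun n => dist y₀ (em Y ((x n).1))) Filter.atTop (nhds L) := by
    have heq : ∀ᶠ n in Filter.atTop, dist y₀ (em Y ((x n).1)) =
        dist (x n) (pC Y y₀) / R n - (T n - T 0) / R n := by
      filter_upwards [step2, Filter.eventually_ge_atTop 1] with n h2 h1
      have hxn : x n = ((x n).1, n) := by
        have hh : x n = ((x n).1, (x n).2) := rfl
        rw [hh, h2]
      have hf := dist_pC y₀ hd (x n).1 n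
      rw [if_neg (by omega)] at hf
      rw [hxn, hf, add_div, mul_div_cancel_left₀ _ (R_pos n).ne']
      ring
    have hthis := hL.sub hw
    rw [sub_zero] at hthis
    refine Filter.Tendsto.congr' ?_ hthis
    filter_upwards [heq] with n h
    exact h.symm
  -- Step 4: find the value
  have exist_i : ∃ i : Fin (Fintype.card Y), dist y₀ (em Y i) = L := by
    by_contra hcon
    push_neg at hcon
    have hne : ∀ i : Fin (Fintype.card Y), ∀ᶠ n in Filter.atTop, (x n).1 ≠ i := by
      intro i
      have hgap : 0 < |dist y₀ (em Y i) - L| := abs_pos.2 (sub_ne_zero.2 (hcon i))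
      have := ha_tend.eventually (Metric.ball_mem_nhds L hgap)
      filter_upwards [this] with n hn hni
      rw [hni] at hn
      simp only [Metric.mem_ball, Real.dist_eq] at hn
      exact absurd hn (lt_irrefl _)
    have hall : ∀ᶠ n in Filter.atTop, ∀ i, (x n).1 ≠ i := Filter.eventually_all.2 hne
    obtain ⟨n, hn⟩ := hall.exists
    exact hn ((x n).1) rfl
  obtain ⟨i, hiL⟩ := exist_i
  refine ⟨i, hiL, ?_⟩
  have hy_ev : ∀ᶠ n in Filter.atTop, (x n).1 = i := by
    have hne : ∀ j : Fin (Fintype.card Y), ∀ᶠ n in Filter.atTop, j ≠ i → (x n).1 ≠ j := by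
      intro j
      by_cases hji : j = i
      · exact Filter.Eventually.of_forall fun n h => absurd hji h
      · have hjL : dist y₀ (em Y j) ≠ L := by
          rw [← hiL]
          exact hy₀ (em Y j) (em Y i) (fun hc => hji (em_injective hc))
        have hgap : 0 < |dist y₀ (em Y j) - L| := abs_pos.2 (sub_ne_zero.2 hjL)
        have := ha_tend.eventually (Metric.ball_mem_nhds L hgap)
        filter_upwards [this] with n hn _ hnj
        rw [hnj] at hn
        simp only [Metric.mem_ball, Real.dist_eq] at hn
        exact absurd hn (lt_irrefl _)
    have hall := Filter.eventually_all.2 hne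
    filter_upwards [hall] with n hn
    by_contra hcon
    exact hn ((x n).1) hcon rfl
  filter_upwards [hy_ev, step2] with n h1 h2
  have : x n = ((x n).1, (x n).2) := rfl
  rw [this, h1, h2]

end WithInstance
end Fwd

namespace Fwd

variable {Y : Type*} [MetricSpace Y] [Fintype Y] [Nonempty Y] (y₀ : Y)

lemma TT_div_tendsto : Filter.Tendsto (fun n : ℕ => (T n - T 0) / R n)
    Filter.atTop (nhds 0) := by
  have h1 : Filter.Tendsto (fun n : ℕ => T n / R n) Filter.atTop (nhds 0) := by
    simp only [T_R_ratio]
    exact tendsto_one_div_add_atTop_nhds_zero_nat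
  have h2 : Filter.Tendsto (fun n : ℕ => T 0 / R n) Filter.atTop (nhds 0) := by
    simp only [T_zero]
    simpa [one_div, Pi.inv_def] using R_tendsto.inv_tendsto_atTop
  simpa [sub_div] using h1.sub h2

section WithInstance

variable [MS : MetricSpace (Carrier Y)]
variable (hd : ∀ q q' : Carrier Y, dist q q' = dC y₀ q q')
variable (hy₀ : ∀ u v : Y, u ≠ v → dist y₀ u ≠ dist y₀ v)

/-- The canonical sequence attached to `i`. -/
def cseq (i : Fin (Fintype.card Y)) : ℕ → Carrier Y := fun n => (i, n)

include hd

lemma cseq_div_tendsto (i : Fin (Fintype.card Y)) :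
    Filter.Tendsto (fun n => dist (cseq (Y := Y) i n) (pC Y y₀) / R n) Filter.atTop
      (nhds (dist y₀ (em Y i))) := by
  have h := (tendsto_const_nhds (α := ℕ) (f := Filter.atTop)
    (x := dist y₀ (em Y i))).add TT_div_tendsto
  rw [add_zero] at h
  refine Filter.Tendsto.congr' ?_ h
  filter_upwards [Filter.eventually_ge_atTop 1] with n hn
  have hf := dist_pC y₀ hd i n
  rw [if_neg (by omega)] at hf
  rw [cseq, hf, add_div, mul_div_cancel_left₀ _ (R_pos n).ne']

lemma cseq_mem (i : Fin (Fintype.card Y)) : cseq (Y := Y) i ∈ SeqInf R (pC Y y₀) := by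
  constructor
  · refine Filter.tendsto_atTop_mono' _ ?_
      (Filter.tendsto_atTop_add_const_right _ (-T 0) T_tendsto)
    filter_upwards [Filter.eventually_ge_atTop 1] with n hn
    have := dist_pC_ge y₀ hd i n hn
    simpa [sub_eq_add_neg, cseq] using this
  · exact ⟨_, cseq_div_tendsto y₀ hd i⟩

lemma cseq_dist_div (i j : Fin (Fintype.card Y)) (n : ℕ) :
    dist (cseq (Y := Y) i n) (cseq (Y := Y) j n) / R n = dist (em Y i) (em Y j) := by
  rw [cseq, cseq, dist_same_level y₀ hd, mul_div_cancel_left₀ _ (R_pos n).ne']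

lemma cseq_base (i j : Fin (Fintype.card Y)) :
    Filter.Tendsto (fun n => dist (cseq (Y := Y) i n) (cseq (Y := Y) j n) / R n)
      Filter.atTop (nhds (dist (em Y i) (em Y j))) := by
  have : (fun n => dist (cseq (Y := Y) i n) (cseq (Y := Y) j n) / R n) =
      fun _ => dist (em Y i) (em Y j) := funext fun n => cseq_dist_div y₀ hd i j n
  rw [this]
  exact tendsto_const_nhds

include hy₀

lemma selfStable_seqInf : SelfStable R (pC Y y₀) (SeqInf R (pC Y y₀)) := by
  refine ⟨subset_rfl, ?_⟩
  intro x hx z hz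
  obtain ⟨Lx, hLx⟩ := hx.2
  obtain ⟨Lz, hLz⟩ := hz.2
  have hLx0 : 0 ≤ Lx := limit_nonneg R_pos (fun n => dist_nonneg) hLx
  have hLz0 : 0 ≤ Lz := limit_nonneg R_pos (fun n => dist_nonneg) hLz
  rcases eq_or_lt_of_le hLx0 with hx0 | hxpos
  · have hx0' : Filter.Tendsto (fun n => dist (x n) (pC Y y₀) / R n) Filter.atTop (nhds 0) := by
      rw [hx0]; exact hLx
    exact ⟨Lz, tendsto_dist_div_of_zero R_pos hx0' hLz⟩
  rcases eq_or_lt_of_le hLz0 with hz0 | hzpos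
  · have hz0' : Filter.Tendsto (fun n => dist (z n) (pC Y y₀) / R n) Filter.atTop (nhds 0) := by
      rw [hz0]; exact hLz
    refine ⟨Lx, ?_⟩
    have := tendsto_dist_div_of_zero R_pos hz0' hLx
    simpa [dist_comm] using this
  · obtain ⟨i, hiL, hiev⟩ := classification y₀ hd hy₀ hx hLx hxpos
    obtain ⟨j, hjL, hjev⟩ := classification y₀ hd hy₀ hz hLz hzpos
    refine ⟨dist (em Y i) (em Y j), ?_⟩
    refine Filter.Tendsto.congr' ?_ (cseq_base y₀ hd i j)
    filter_upwards [hiev, hjev] with n h1 h2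
    rw [h1, h2]
    rfl

lemma maxSelfStable_seqInf : MaxSelfStable R (pC Y y₀) (SeqInf R (pC Y y₀)) :=
  ⟨selfStable_seqInf y₀ hd hy₀, fun F' hF' hsub => subset_antisymm hsub hF'.1⟩

lemma max_eq_seqInf {F : Set (ℕ → Carrier Y)} (hF : MaxSelfStable R (pC Y y₀) F) :
    F = SeqInf R (pC Y y₀) :=
  hF.2 _ (selfStable_seqInf y₀ hd hy₀) hF.1.1

end WithInstance
end Fwd

theorem forward_direction {Y : Type*} [MetricSpace Y] [Fintype Y] [Nonempty Y]
    (y₀ : Y) (hy₀ : ∀ u v : Y, u ≠ v → dist y₀ u ≠ dist y₀ v) :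
    (∃ (X : Type) (_ : MetricSpace X), UnboundedSpace X ∧
      ∃ r : ℕ → ℝ, ScalingSeq r ∧ ∃ p : X,
        (∃ F : Set (ℕ → X), MaxSelfStable r p F) ∧
        (∀ F₁ F₂ : Set (ℕ → X), MaxSelfStable r p F₁ → MaxSelfStable r p F₂ →
          PretangentCl r F₁ = PretangentCl r F₂) ∧
        (∀ F : Set (ℕ → X), MaxSelfStable r p F →
          ∃ g : Y → Set (ℕ → X),
            Function.Injective g ∧ (∀ y, g y ∈ PretangentCl r F) ∧
            (∀ v ∈ PretangentCl r F, ∃ y, g y = v) ∧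
            ∀ y₁ y₂ : Y, rhoX r (g y₁) (g y₂) = dist y₁ y₂)) := by
  classical
  letI MS : MetricSpace (Fwd.Carrier Y) := Fwd.instC y₀
  have hd : ∀ q q' : Fwd.Carrier Y, dist q q' = Fwd.dC y₀ q q' := fun _ _ => rfl
  set e := Fintype.equivFin Y with he
  have hem : ∀ y : Y, Fwd.em Y (e y) = y := fun y => e.symm_apply_apply y
  refine ⟨Fwd.Carrier Y, MS, ?_, Fwd.R, ⟨Fwd.R_pos, Fwd.R_tendsto⟩, Fwd.pC Y y₀, ?_, ?_, ?_⟩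
  · -- unboundedness
    intro hb
    obtain ⟨C, hC⟩ := Metric.isBounded_iff.1 hb
    obtain ⟨n, hn1, hn2⟩ :=
      ((Fwd.T_tendsto.eventually_gt_atTop (C + Fwd.T 0)).and
        (Filter.eventually_ge_atTop 1)).exists
    have h1 := Fwd.dist_pC_ge y₀ hd (e y₀) n hn2
    have h2 := hC (Set.mem_univ ((e y₀, n) : Fwd.Carrier Y)) (Set.mem_univ (Fwd.pC Y y₀))
    linarith
  · exact ⟨_, Fwd.maxSelfStable_seqInf y₀ hd hy₀⟩
  · intro F₁ F₂ h₁ h₂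
    rw [Fwd.max_eq_seqInf y₀ hd hy₀ h₁, Fwd.max_eq_seqInf y₀ hd hy₀ h₂]
  · intro F hF
    have hFeq := Fwd.max_eq_seqInf y₀ hd hy₀ hF
    subst hFeq
    set S := SeqInf Fwd.R (Fwd.pC Y y₀) with hS
    refine ⟨fun y => {w | w ∈ S ∧ EquivSeq Fwd.R (Fwd.cseq (e y)) w}, ?_, ?_, ?_, ?_⟩
    · -- injectivity
      intro y₁ y₂ hgy
      have hc1 : Fwd.cseq (Y := Y) (e y₁) ∈
          {w | w ∈ S ∧ EquivSeq Fwd.R (Fwd.cseq (e y₁)) w} :=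
        ⟨Fwd.cseq_mem y₀ hd _, equivSeq_refl _⟩
      have hgy2 : ({w | w ∈ S ∧ EquivSeq Fwd.R (Fwd.cseq (e y₁)) w} : Set (ℕ → Fwd.Carrier Y))
          = {w | w ∈ S ∧ EquivSeq Fwd.R (Fwd.cseq (e y₂)) w} := hgy
      rw [hgy2] at hc1
      have h2 : EquivSeq Fwd.R (Fwd.cseq (Y := Y) (e y₂)) (Fwd.cseq (Y := Y) (e y₁)) := hc1.2
      have h3 := Fwd.cseq_base y₀ hd (e y₂) (e y₁)
      have h4 := tendsto_nhds_unique h2 h3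
      rw [hem, hem] at h4
      exact (dist_eq_zero.1 h4.symm).symm
    · -- membership
      intro y
      exact ⟨Fwd.cseq (e y), Fwd.cseq_mem y₀ hd _, rfl⟩
    · -- surjectivity
      rintro v ⟨x, hxS, rfl⟩
      obtain ⟨Lx, hLx⟩ := hxS.2
      have hLx0 : 0 ≤ Lx := limit_nonneg Fwd.R_pos (fun n => dist_nonneg) hLx
      rcases eq_or_lt_of_le hLx0 with hx0 | hxpos
      · refine ⟨y₀, ?_⟩
        have hx0' : Filter.Tendsto (fun n => dist (x n) (Fwd.pC Y y₀) / Fwd.R n)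
            Filter.atTop (nhds 0) := by rw [hx0]; exact hLx
        have hc0 : Filter.Tendsto (fun n => dist (Fwd.cseq (Y := Y) (e y₀) n) (Fwd.pC Y y₀)
            / Fwd.R n) Filter.atTop (nhds 0) := by
          have := Fwd.cseq_div_tendsto y₀ hd (e y₀)
          rwa [hem, dist_self] at this
        have hequiv : EquivSeq Fwd.R (Fwd.cseq (Y := Y) (e y₀)) x :=
          tendsto_dist_div_of_zero Fwd.R_pos hc0 hx0'
        exact class_eq_of_equiv Fwd.R_pos S hequiv
      · obtain ⟨i, hiL, hiev⟩ := Fwd.classification y₀ hd hy₀ hxS hLx hxpos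
        refine ⟨Fwd.em Y i, ?_⟩
        have hei : e (Fwd.em Y i) = i := e.apply_symm_apply i
        show ({w | w ∈ S ∧ EquivSeq Fwd.R (Fwd.cseq (e (Fwd.em Y i))) w} : Set (ℕ → Fwd.Carrier Y))
          = {y | y ∈ S ∧ EquivSeq Fwd.R x y}
        rw [hei]
        have hequiv : EquivSeq Fwd.R (Fwd.cseq (Y := Y) i) x := by
          refine Filter.Tendsto.congr' ?_ (tendsto_const_nhds (x := (0:ℝ)))
          filter_upwards [hiev] with n hn
          rw [hn]
          simp [Fwd.cseq]
        exact class_eq_of_equiv Fwd.R_pos S hequiv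
    · -- the isometry identity
      intro y₁ y₂
      have hset : {L : ℝ | ∃ u ∈ {w | w ∈ S ∧ EquivSeq Fwd.R (Fwd.cseq (e y₁)) w},
          ∃ w ∈ {w | w ∈ S ∧ EquivSeq Fwd.R (Fwd.cseq (e y₂)) w},
          Filter.Tendsto (fun n => dist (u n) (w n) / Fwd.R n) Filter.atTop (nhds L)}
          = {dist y₁ y₂} := by
        ext L
        simp only [Set.mem_setOf_eq, Set.mem_singleton_iff]
        constructor
        · rintro ⟨u, ⟨huS, hu⟩, w, ⟨hwS, hw⟩, hL⟩
          have base := Fwd.cseq_base y₀ hd (e y₁) (e y₂)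
          rw [hem, hem] at base
          have h1 := tendsto_dist_div_congr Fwd.R_pos hu base
          have h2 := tendsto_dist_div_congr_right Fwd.R_pos hw h1
          exact tendsto_nhds_unique hL h2
        · rintro rfl
          refine ⟨Fwd.cseq (e y₁), ⟨Fwd.cseq_mem y₀ hd _, equivSeq_refl _⟩,
            Fwd.cseq (e y₂), ⟨Fwd.cseq_mem y₀ hd _, equivSeq_refl _⟩, ?_⟩
          have base := Fwd.cseq_base y₀ hd (e y₁) (e y₂)
          rwa [hem, hem] at base
      rw [rhoX, hset, csSup_singleton]

section Reverse

variable {X : Type*} [MetricSpace X] {r : ℕ → ℝ} {p : X}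

/-- From any sequence escaping to infinity one can build a "root" sequence:
one with `d(z_n,p) → ∞` but `d(z_n,p)/r_n → 0`. -/
lemma root_exists (hr : ScalingSeq r) {x : ℕ → X}
    (hx : Filter.Tendsto (fun n => dist (x n) p) Filter.atTop Filter.atTop) :
    ∃ z : ℕ → X, Filter.Tendsto (fun n => dist (z n) p) Filter.atTop Filter.atTop ∧
      Filter.Tendsto (fun n => dist (z n) p / r n) Filter.atTop (nhds 0) := by
  classical
  set u : ℕ → ℝ := fun n => dist (x n) p with hu
  set B : ℕ → ℝ := fun j => (Finset.range (j + 1)).sup' Finset.nonempty_range_add_one u with hB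
  have hBu : ∀ j, u j ≤ B j := fun j =>
    Finset.le_sup' u (Finset.self_mem_range_succ j)
  have hB0 : ∀ j, 0 ≤ B j := fun j => le_trans dist_nonneg (hBu j)
  have hNex : ∀ j : ℕ, ∃ N : ℕ, ∀ n ≥ N, ((j : ℝ) + 1) * (1 + B j) ≤ r n := fun j =>
    Filter.eventually_atTop.1 (hr.2.eventually_ge_atTop (((j : ℝ) + 1) * (1 + B j)))
  choose N hN using hNex
  set Nt : ℕ → ℕ := fun j => j + (Finset.range (j + 1)).sup N with hNt
  have hNt_ge : ∀ j, j ≤ Nt j := fun j => Nat.le_add_right _ _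
  have hNt_N : ∀ j, N j ≤ Nt j := fun j =>
    le_trans (Finset.le_sup (Finset.self_mem_range_succ j)) (Nat.le_add_left _ _)
  set m : ℕ → ℕ := fun n => Nat.findGreatest (fun j => Nt j ≤ n) n with hm
  have hm_tend : Filter.Tendsto m Filter.atTop Filter.atTop := by
    rw [Filter.tendsto_atTop]
    intro J
    filter_upwards [Filter.eventually_ge_atTop (Nt J)] with n hn
    exact Nat.le_findGreatest (le_trans (hNt_ge J) hn) hn
  have hm_bound : ∀ n, Nt 1 ≤ n → u (m n) / r n ≤ 1 / ((m n : ℝ) + 1) := by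
    intro n hn
    have h1n : 1 ≤ n := le_trans (hNt_ge 1) hn
    have hP : Nt (m n) ≤ n :=
      Nat.findGreatest_spec (P := fun j => Nt j ≤ n) h1n hn
    have hNn : N (m n) ≤ n := le_trans (hNt_N (m n)) hP
    have hrn : ((m n : ℝ) + 1) * (1 + B (m n)) ≤ r n := hN (m n) n hNn
    have hrpos := hr.1 n
    rw [div_le_div_iff₀ hrpos (by positivity)]
    have hum : u (m n) ≤ B (m n) := hBu (m n)
    have hB0' := hB0 (m n)
    nlinarith [Nat.cast_nonneg (α := ℝ) (m n)]
  refine ⟨fun n => x (m n), hx.comp hm_tend, ?_⟩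
  have hg : Filter.Tendsto (fun n => 1 / ((m n : ℝ) + 1)) Filter.atTop (nhds 0) := by
    simp only [one_div]
    apply Filter.Tendsto.inv_tendsto_atTop
    apply Filter.tendsto_atTop_add_const_right _ 1
    exact tendsto_natCast_atTop_atTop.comp hm_tend
  apply squeeze_zero' (Filter.Eventually.of_forall fun n =>
    div_nonneg dist_nonneg (hr.1 n).le) _ hg
  filter_upwards [Filter.eventually_ge_atTop (Nt 1)] with n hn
  exact hm_bound n hn

theorem reverse_direction {Y : Type*} [MetricSpace Y] [Fintype Y] [Nonempty Y]
    (h : ∃ (X : Type) (_ : MetricSpace X), UnboundedSpace X ∧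
      ∃ r : ℕ → ℝ, ScalingSeq r ∧ ∃ p : X,
        (∃ F : Set (ℕ → X), MaxSelfStable r p F) ∧
        (∀ F₁ F₂ : Set (ℕ → X), MaxSelfStable r p F₁ → MaxSelfStable r p F₂ →
          PretangentCl r F₁ = PretangentCl r F₂) ∧
        (∀ F : Set (ℕ → X), MaxSelfStable r p F →
          ∃ g : Y → Set (ℕ → X),
            Function.Injective g ∧ (∀ y, g y ∈ PretangentCl r F) ∧
            (∀ v ∈ PretangentCl r F, ∃ y, g y = v) ∧
            ∀ y₁ y₂ : Y, rhoX r (g y₁) (g y₂) = dist y₁ y₂)) :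
    ∃ y₀ : Y, ∀ x z : Y, x ≠ z → dist y₀ x ≠ dist y₀ z := by
  classical
  obtain ⟨X, _inst, hXunb, r, hr, p, ⟨F, hF⟩, huniq, hiso⟩ := h
  have hmax_unique : ∀ F', MaxSelfStable r p F' → F' = F := fun F' hF' =>
    pretangent_eq_imp_eq (huniq F' F hF' hF)
  have hS_sub : SeqInf r p ⊆ F := by
    intro x hx
    have hsing : SelfStable r p {x} := by
      refine ⟨by simpa using hx, ?_⟩
      rintro a ha b hb
      rw [Set.mem_singleton_iff] at ha hb
      subst ha; subst hb
      exact ⟨0, by simpa [dist_self] using (tendsto_const_nhds :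
        Filter.Tendsto (fun _ : ℕ => (0:ℝ)) Filter.atTop (nhds 0))⟩
    obtain ⟨F'', hsub, hmax''⟩ := exists_maxSelfStable_superset hsing
    rw [← hmax_unique F'' hmax'']
    exact hsub rfl
  have hF_eq : F = SeqInf r p := subset_antisymm hF.1.1 hS_sub
  have hself : SelfStable r p (SeqInf r p) := hF_eq ▸ hF.1
  obtain ⟨g, hg_inj, hg_mem, hg_surj, hg_iso⟩ := hiso F hF
  obtain ⟨x₀, hx₀F, hgy⟩ := hg_mem (Classical.arbitrary Y)
  have hx₀S : x₀ ∈ SeqInf r p := hF_eq ▸ hx₀F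
  obtain ⟨z, hz1, hz2⟩ := root_exists hr hx₀S.1
  have hzS : z ∈ SeqInf r p := ⟨hz1, 0, hz2⟩
  have hzF : z ∈ F := hS_sub hzS
  obtain ⟨y₀, hy₀z⟩ := hg_surj {w | w ∈ F ∧ EquivSeq r z w} ⟨z, hzF, rfl⟩
  refine ⟨y₀, ?_⟩
  choose xy hxyF hgyx using hg_mem
  have hxyS : ∀ y, xy y ∈ SeqInf r p := fun y => hF_eq ▸ hxyF y
  choose Ly hLy using fun y => (hxyS y).2
  -- the representative of `y₀` has `p`-limit 0
  have hz_in : z ∈ g y₀ := by rw [hy₀z]; exact ⟨hzF, equivSeq_refl z⟩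
  have hequiv0 : EquivSeq r (xy y₀) z := by
    have hh := hz_in; rw [hgyx y₀] at hh; exact hh.2
  have hx0lim : Filter.Tendsto (fun n => dist (xy y₀ n) p / r n) Filter.atTop (nhds 0) := by
    have hz' : Filter.Tendsto (fun n => dist (z n) ((fun _ => p) n) / r n)
        Filter.atTop (nhds 0) := hz2
    have := tendsto_dist_div_congr hr.1 (equivSeq_symm hequiv0) hz'
    simpa using this
  -- distances from y₀ are the limits
  have hdist_eq : ∀ y : Y, dist y₀ y = Ly y := by
    intro y
    rw [← hg_iso y₀ y]
    have hset : {L : ℝ | ∃ u ∈ g y₀, ∃ w ∈ g y,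
        Filter.Tendsto (fun n => dist (u n) (w n) / r n) Filter.atTop (nhds L)}
        = {Ly y} := by
      ext L
      simp only [Set.mem_setOf_eq, Set.mem_singleton_iff]
      constructor
      · rintro ⟨u, hu, w, hw, hL⟩
        rw [hgyx y₀] at hu
        rw [hgyx y] at hw
        have hu0 : Filter.Tendsto (fun n => dist (u n) p / r n) Filter.atTop (nhds 0) := by
          have hx0' : Filter.Tendsto (fun n => dist (xy y₀ n) ((fun _ => p) n) / r n)
              Filter.atTop (nhds 0) := hx0lim
          simpa using tendsto_dist_div_congr hr.1 hu.2 hx0'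
        have hwL : Filter.Tendsto (fun n => dist (w n) p / r n) Filter.atTop (nhds (Ly y)) := by
          have hLy' : Filter.Tendsto (fun n => dist (xy y n) ((fun _ => p) n) / r n)
              Filter.atTop (nhds (Ly y)) := hLy y
          simpa using tendsto_dist_div_congr hr.1 hw.2 hLy'
        exact tendsto_nhds_unique hL (tendsto_dist_div_of_zero hr.1 hu0 hwL)
      · rintro rfl
        exact ⟨xy y₀, by rw [hgyx y₀]; exact ⟨hxyF y₀, equivSeq_refl _⟩,
          xy y, by rw [hgyx y]; exact ⟨hxyF y, equivSeq_refl _⟩,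
          tendsto_dist_div_of_zero hr.1 hx0lim (hLy y)⟩
    rw [rhoX, hset, csSup_singleton]
  -- distinct points have distinct limits
  intro a b hab
  rw [hdist_eq a, hdist_eq b]
  intro hLab
  have hga_ne : g a ≠ g b := fun hgg => hab (hg_inj hgg)
  have hnequiv : ¬ EquivSeq r (xy a) (xy b) := by
    intro he
    apply hga_ne
    rw [hgyx a, hgyx b]
    exact class_eq_of_equiv hr.1 F he
  obtain ⟨ρ, hρ⟩ := hself.2 (xy a) (hxyS a) (xy b) (hxyS b)
  have hρ0 : ρ ≠ 0 := by
    intro h0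
    exact hnequiv (by rw [EquivSeq, ← h0]; exact hρ)
  set w : ℕ → X := fun n => if n % 2 = 0 then xy a n else xy b n with hwdef
  have hwS : w ∈ SeqInf r p := by
    constructor
    · rw [Filter.tendsto_atTop]
      intro C
      filter_upwards [Filter.tendsto_atTop.1 (hxyS a).1 C,
        Filter.tendsto_atTop.1 (hxyS b).1 C] with n h1 h2
      by_cases hpar : n % 2 = 0
      · simpa [hwdef, hpar] using h1
      · simpa [hwdef, hpar] using h2
    · refine ⟨Ly a, ?_⟩
      rw [Metric.tendsto_atTop]
      intro ε hε
      obtain ⟨N1, h1⟩ := Metric.tendsto_atTop.1 (hLy a) ε hε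
      obtain ⟨N2, h2⟩ := Metric.tendsto_atTop.1 (hLy b) ε hε
      refine ⟨max N1 N2, fun n hn => ?_⟩
      by_cases hpar : n % 2 = 0
      · simpa [hwdef, hpar] using h1 n (le_trans (le_max_left _ _) hn)
      · have := h2 n (le_trans (le_max_right _ _) hn)
        rw [← hLab] at this
        simpa [hwdef, hpar] using this
  obtain ⟨M, hM⟩ := hself.2 (xy a) (hxyS a) w hwS
  have heven : Filter.Tendsto (fun k : ℕ => 2 * k) Filter.atTop Filter.atTop :=
    Filter.tendsto_atTop_mono (fun k => by simp; omega) Filter.tendsto_id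
  have hodd : Filter.Tendsto (fun k : ℕ => 2 * k + 1) Filter.atTop Filter.atTop :=
    Filter.tendsto_atTop_mono (fun k => by simp; omega) Filter.tendsto_id
  have hM0 : M = 0 := by
    have h_even := hM.comp heven
    have hzero : (fun k : ℕ => dist (xy a (2 * k)) (w (2 * k)) / r (2 * k)) =
        fun _ => (0 : ℝ) := by
      funext k
      simp [hwdef, Nat.mul_mod_right]
    rw [show ((fun n => dist (xy a n) (w n) / r n) ∘ fun k : ℕ => 2 * k) =
      (fun k : ℕ => dist (xy a (2 * k)) (w (2 * k)) / r (2 * k)) from rfl, hzero] at h_even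
    exact (tendsto_nhds_unique h_even tendsto_const_nhds)
  have h_odd := hM.comp hodd
  have hodd_eq : ((fun n => dist (xy a n) (w n) / r n) ∘ fun k : ℕ => 2 * k + 1) =
      (fun k : ℕ => dist (xy a (2 * k + 1)) (xy b (2 * k + 1)) / r (2 * k + 1)) := by
    funext k
    have : (2 * k + 1) % 2 = 1 := by omega
    simp [hwdef, this]
  rw [hodd_eq] at h_odd
  have h_odd' := hρ.comp hodd
  have : M = ρ := tendsto_nhds_unique h_odd h_odd'
  exact hρ0 (by rw [← this, hM0])

end Reverse

/-- Corollary c2.2.24. A finite nonempty metric space `(Y, δ)` has a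
point `y₀` whose distances to distinct points are distinct iff there exist an unbounded
metric space `(X, d)` and a scaling sequence `r̃` such that `(X, d)` has exactly one
pretangent space at infinity w.r.t. `r̃`, and this pretangent space is isometric to
`(Y, δ)` (the metric of a pretangent space being `ρ = ρ_X`). -/
theorem finite_space_unique_pretangent_iff {Y : Type*} [MetricSpace Y] [Fintype Y]
    [Nonempty Y] :
    (∃ y₀ : Y, ∀ x z : Y, x ≠ z → dist y₀ x ≠ dist y₀ z) ↔
    (∃ (X : Type) (_ : MetricSpace X), UnboundedSpace X ∧
      ∃ r : ℕ → ℝ, ScalingSeq r ∧ ∃ p : X,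
        (∃ F : Set (ℕ → X), MaxSelfStable r p F) ∧
        (∀ F₁ F₂ : Set (ℕ → X), MaxSelfStable r p F₁ → MaxSelfStable r p F₂ →
          PretangentCl r F₁ = PretangentCl r F₂) ∧
        (∀ F : Set (ℕ → X), MaxSelfStable r p F →
          ∃ g : Y → Set (ℕ → X),
            Function.Injective g ∧ (∀ y, g y ∈ PretangentCl r F) ∧
            (∀ v ∈ PretangentCl r F, ∃ y, g y = v) ∧
            ∀ y₁ y₂ : Y, rhoX r (g y₁) (g y₂) = dist y₁ y₂)) := by
  
  constructor
  · rintro ⟨y₀, hy₀⟩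
    exact forward_direction y₀ hy₀
  · exact reverse_direction
end

section
/- Let (X,d) be an unbounded metric space, p∈X, let r̃ be a scaling sequence, and let X̃_{∞,r̃} be a maximal self-stable subset of Seq(X,r̃). If ỹ=(y_n) is a sequence in X with lim_n d(y_n,p)=∞ and ỹ is mutually stable with every x̃∈X̃_{∞,r̃}, then ỹ∈X̃_{∞,r̃}. -/
open Filter Topology
open scoped Classical

/-- Squeeze: if `|f - g| ≤ h`, `h → 0` and `g → L`, then `f → L`. -/
lemma tendsto_of_abs_sub_le' {f g h : ℕ → ℝ} (hb : ∀ n, |f n - g n| ≤ h n)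
    (hh : Filter.Tendsto h Filter.atTop (nhds 0)) {L : ℝ}
    (hg : Filter.Tendsto g Filter.atTop (nhds L)) :
    Filter.Tendsto f Filter.atTop (nhds L) := by
  have h0 : Filter.Tendsto (fun n => f n - g n) Filter.atTop (nhds 0) :=
    squeeze_zero_norm hb hh
  have := h0.add hg
  simpa using this

/-- Existence of a "root" sequence in an unbounded space. -/
lemma exists_rootSeq {X : Type*} [MetricSpace X] (hX : UnboundedSpace X) (p : X)
    (r : ℕ → ℝ) (hr : ScalingSeq r) :
    ∃ z : ℕ → X, Filter.Tendsto (fun n => dist (z n) p) Filter.atTop Filter.atTop ∧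
      Filter.Tendsto (fun n => dist (z n) p / r n) Filter.atTop (nhds 0) := by
  have hq : ∀ k : ℕ, ∃ x : X, (k : ℝ) < dist x p := by
    intro k
    by_contra h
    push_neg at h
    exact hX ((Metric.isBounded_closedBall (x := p) (r := (k : ℝ))).subset
      (fun x _ => by simpa [Metric.mem_closedBall] using h x))
  choose q hq using hq
  set s : ℕ → ℝ := fun n => Real.sqrt (r n) with hs_def
  have hs : Filter.Tendsto s Filter.atTop Filter.atTop := by
    rw [Filter.tendsto_atTop]
    intro b
    filter_upwards [hr.2.eventually_ge_atTop (b ^ 2)] with n hn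
    calc b ≤ |b| := le_abs_self b
      _ = Real.sqrt (b ^ 2) := (Real.sqrt_sq_eq_abs b).symm
      _ ≤ s n := Real.sqrt_le_sqrt hn
  set m : ℕ → ℕ := fun n => Nat.findGreatest (fun j => dist (q j) p ≤ s n) ⌈s n⌉₊ with hm_def
  have hwit : ∀ J : ℕ, ∀ᶠ n in Filter.atTop, J ≤ m n := by
    intro J
    filter_upwards [hs.eventually_ge_atTop (dist (q J) p)] with n hn
    have hJle : J ≤ ⌈s n⌉₊ := by
      have : (J : ℝ) ≤ s n := le_trans (hq J).le hn
      exact_mod_cast this.trans (Nat.le_ceil (s n))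
    exact Nat.le_findGreatest hJle hn
  refine ⟨fun n => q (m n), ?_, ?_⟩
  · have hm_top : Filter.Tendsto (fun n => (m n : ℝ)) Filter.atTop Filter.atTop := by
      rw [Filter.tendsto_atTop]
      intro b
      filter_upwards [hwit ⌈b⌉₊] with n hn
      calc b ≤ (⌈b⌉₊ : ℝ) := Nat.le_ceil b
        _ ≤ (m n : ℝ) := by exact_mod_cast hn
    exact tendsto_atTop_mono (fun n => (hq (m n)).le) hm_top
  · apply squeeze_zero' (g := fun n => 1 / s n)
    · filter_upwards with n using div_nonneg dist_nonneg (hr.1 n).le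
    · filter_upwards [hs.eventually_ge_atTop (dist (q 0) p)] with n hn
      have hJle : (0 : ℕ) ≤ ⌈s n⌉₊ := Nat.zero_le _
      have hspec : dist (q (m n)) p ≤ s n := by
        simp only [hm_def]
        exact Nat.findGreatest_spec (P := fun j => dist (q j) p ≤ s n) hJle hn
      calc dist (q (m n)) p / r n ≤ s n / r n := by
            gcongr
            exact (hr.1 n).le
        _ = 1 / s n := Real.sqrt_div_self'
    · have := hs.inv_tendsto_atTop
      simp only [one_div]
      exact this

lemma MutuallyStable.symm' {X : Type*} [MetricSpace X] {r : ℕ → ℝ} {x y : ℕ → X}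
    (h : MutuallyStable r x y) : MutuallyStable r y x := by
  obtain ⟨L, hL⟩ := h
  exact ⟨L, by simpa [dist_comm] using hL⟩

lemma MutuallyStable.self {X : Type*} [MetricSpace X] (r : ℕ → ℝ) (x : ℕ → X) :
    MutuallyStable r x x :=
  ⟨0, by simp only [dist_self, zero_div]; exact tendsto_const_nhds⟩

/-- A root sequence is mutually stable with any member of `Seq(X,r̃)`. -/
lemma stable_of_root {X : Type*} [MetricSpace X] {r : ℕ → ℝ} (hr : ScalingSeq r) {p : X}
    {z x : ℕ → X}
    (hz : Filter.Tendsto (fun n => dist (z n) p / r n) Filter.atTop (nhds 0))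
    {L : ℝ} (hx : Filter.Tendsto (fun n => dist (x n) p / r n) Filter.atTop (nhds L)) :
    Filter.Tendsto (fun n => dist (x n) (z n) / r n) Filter.atTop (nhds L) := by
  apply tendsto_of_abs_sub_le' (g := fun n => dist (x n) p / r n)
    (h := fun n => dist (z n) p / r n) _ hz hx
  intro n
  have h1 : |dist (x n) (z n) - dist (x n) p| ≤ dist (z n) p := by
    have := abs_dist_sub_le (z n) p (x n)
    simpa [dist_comm] using this
  calc |dist (x n) (z n) / r n - dist (x n) p / r n|
      = |dist (x n) (z n) - dist (x n) p| / r n := by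
        rw [div_sub_div_same, abs_div, abs_of_pos (hr.1 n)]
    _ ≤ dist (z n) p / r n := by gcongr; exact (hr.1 n).le

/-- Lemma l1.2.4. If `ỹ` tends to infinity and is mutually stable
with every member of a maximal self-stable set `X̃_{∞,r̃}`, then `ỹ ∈ X̃_{∞,r̃}`. -/
theorem mem_maxSelfStable_of_mutuallyStable {X : Type*} [MetricSpace X]
    (hX : UnboundedSpace X) (p : X) (r : ℕ → ℝ) (hr : ScalingSeq r)
    (F : Set (ℕ → X)) (hF : MaxSelfStable r p F) (y : ℕ → X)
    (hy : Filter.Tendsto (fun n => dist (y n) p) Filter.atTop Filter.atTop)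
    (hst : ∀ x ∈ F, MutuallyStable r x y) :
    y ∈ F := by
  obtain ⟨z, hzinf, hz0⟩ := exists_rootSeq hX p r hr
  have hzSeq : z ∈ SeqInf r p := ⟨hzinf, 0, hz0⟩
  -- `F ∪ {z}` is self-stable, hence `z ∈ F` by maximality.
  have hzF : z ∈ F := by
    have hss : SelfStable r p (insert z F) := by
      constructor
      · exact Set.insert_subset hzSeq hF.1.1
      · rintro a ha b hb
        rcases Set.mem_insert_iff.1 ha with h1 | h1 <;>
          rcases Set.mem_insert_iff.1 hb with h2 | h2
        · rw [h1, h2]; exact MutuallyStable.self r z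
        · rw [h1]
          obtain ⟨L, hL⟩ := (hF.1.1 h2).2
          exact MutuallyStable.symm' ⟨L, stable_of_root hr hz0 hL⟩
        · rw [h2]
          obtain ⟨L', hL'⟩ := (hF.1.1 h1).2
          exact ⟨L', stable_of_root hr hz0 hL'⟩
        · exact hF.1.2 a h1 b h2
    have heq := hF.2 (insert z F) hss (Set.subset_insert z F)
    rw [heq]
    exact Set.mem_insert z F
  -- `y` is mutually stable with `z`, hence `d(y_n,p)/r_n` converges.
  obtain ⟨L, hL⟩ := hst z hzF
  have hyL : Filter.Tendsto (fun n => dist (y n) p / r n) Filter.atTop (nhds L) := by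
    apply tendsto_of_abs_sub_le' (g := fun n => dist (z n) (y n) / r n)
      (h := fun n => dist (z n) p / r n) _ hz0 hL
    intro n
    have h1 : |dist (y n) p - dist (z n) (y n)| ≤ dist (z n) p := by
      have := abs_dist_sub_le p (z n) (y n)
      simpa [dist_comm] using this
    calc |dist (y n) p / r n - dist (z n) (y n) / r n|
        = |dist (y n) p - dist (z n) (y n)| / r n := by
          rw [div_sub_div_same, abs_div, abs_of_pos (hr.1 n)]
      _ ≤ dist (z n) p / r n := by gcongr; exact (hr.1 n).le
  have hySeq : y ∈ SeqInf r p := ⟨hy, L, hyL⟩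
  -- `F ∪ {y}` is self-stable, hence `y ∈ F` by maximality.
  have hss : SelfStable r p (insert y F) := by
    constructor
    · exact Set.insert_subset hySeq hF.1.1
    · rintro a ha b hb
      rcases Set.mem_insert_iff.1 ha with h1 | h1 <;>
        rcases Set.mem_insert_iff.1 hb with h2 | h2
      · rw [h1, h2]; exact MutuallyStable.self r y
      · rw [h1]; exact MutuallyStable.symm' (hst b h2)
      · rw [h2]; exact hst a h1
      · exact hF.1.2 a h1 b h2
  have heq := hF.2 (insert y F) hss (Set.subset_insert y F)
  rw [heq]
  exact Set.mem_insert y F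
end
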